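/- Existence part of quantitative Radon's theorem: For any d ≥ 1 and d+2 points in ℝ^d in general position (every d+1 of them affinely independent), there exists a partition of the index set Fin (d+2) into disjoint sets I and J such that the convex hulls of the corresponding point sets intersect in exactly one point. -/
import Mathlib

open Finset

-- extract index-based weights from convex hull membership
lemma radon_extract_weights {n d : ℕ} (p : Fin n → (Fin d → ℝ)) (I : Set (Fin n))
    {y : Fin d → ℝ} (hy : y ∈ convexHull ℝ (p '' I)) :
    ∃ a : Fin n → ℝ, (∀ i, 0 ≤ a i) ∧ (∀ i, i ∉ I → a i = 0) ∧
      ∑ i, a i = 1 ∧ ∑ i, a i • p i = y := by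
  classical
  rw [mem_convexHull_iff_exists_fintype] at hy
  obtain ⟨ι, hι, w, z, hw0, hw1, hz, hx⟩ := hy
  choose σ hσI hσp using fun i => hz i
  refine ⟨fun j => ∑ i ∈ Finset.univ.filter (fun i => σ i = j), w i, ?_, ?_, ?_, ?_⟩
  · intro j; exact Finset.sum_nonneg fun i _ => hw0 i
  · intro j hj
    have h0 : Finset.univ.filter (fun i => σ i = j) = ∅ :=
      Finset.filter_eq_empty_iff.mpr (fun i _ h => hj (h ▸ hσI i))
    simp only [h0, Finset.sum_empty]
  · rw [Finset.sum_fiberwise Finset.univ σ w]; exact hw1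
  · calc ∑ j, (∑ i ∈ Finset.univ.filter (fun i => σ i = j), w i) • p j
        = ∑ j, ∑ i ∈ Finset.univ.filter (fun i => σ i = j), w i • z i := by
          refine Finset.sum_congr rfl fun j _ => ?_
          rw [Finset.sum_smul]
          refine Finset.sum_congr rfl fun i hi => ?_
          rw [← hσp i, (Finset.mem_filter.mp hi).2]
      _ = ∑ i, w i • z i := Finset.sum_fiberwise _ _ _
      _ = y := hx

theorem quantitative_radon_existence (d : ℕ) (hd : 1 ≤ d)
    (p : Fin (d + 2) → (Fin d → ℝ))
    (hgen : ∀ s : Finset (Fin (d + 2)), s.card = d + 1 →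
      AffineIndependent ℝ (fun i : s => p i)) :
    ∃ I J : Set (Fin (d + 2)), I ∩ J = ∅ ∧ I ∪ J = Set.univ ∧
      ∃ x : Fin d → ℝ, convexHull ℝ (p '' I) ∩ convexHull ℝ (p '' J) = {x} := by
  classical
  -- any dependency vanishing at one index is zero
  have key : ∀ c : Fin (d+2) → ℝ, ∑ i, c i = 0 → ∑ i, c i • p i = 0 →
      ∀ i0, c i0 = 0 → ∀ i, c i = 0 := by
    intro c hc1 hc2 i0 h0 i
    by_cases hi : i = i0
    · rw [hi]; exact h0
    · set s := Finset.univ.erase i0 with hs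
      have hcard : s.card = d + 1 := by
        rw [hs, Finset.card_erase_of_mem (Finset.mem_univ _), Finset.card_univ,
          Fintype.card_fin]
        omega
      have h1 : ∑ j ∈ s, c j = 0 := by
        rw [hs, Finset.sum_erase_eq_sub (Finset.mem_univ i0), hc1, h0, sub_zero]
      have h2 : ∑ j ∈ s, c j • p j = 0 := by
        rw [hs, Finset.sum_erase_eq_sub (Finset.mem_univ i0), hc2, h0, zero_smul, sub_zero]
      have := affineIndependent_iff.mp (hgen s hcard) Finset.univ (fun j => c j)
        (by rw [Finset.sum_coe_sort s c]; exact h1)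
        (by rw [Finset.sum_coe_sort s (fun j => c j • p j)]; exact h2)
      exact this ⟨i, by simp [hs, hi]⟩ (Finset.mem_univ _)
  -- existence of a dependency
  have hnotai : ¬ AffineIndependent ℝ p := by
    intro h
    have h1 := h.finrank_vectorSpan_add_one
    have h2 : Module.finrank ℝ (vectorSpan ℝ (Set.range p)) ≤
        Module.finrank ℝ (Fin d → ℝ) := Submodule.finrank_le _
    rw [Module.finrank_fin_fun ℝ] at h2
    rw [Fintype.card_fin] at h1
    omega
  rw [affineIndependent_iff] at hnotai
  push_neg at hnotai
  obtain ⟨s, w0, hsum, hcomb, e, he, hne⟩ := hnotai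
  set w : Fin (d+2) → ℝ := fun i => if i ∈ s then w0 i else 0 with hw
  have hw1 : ∑ i, w i = 0 := by
    rw [hw]; rw [Finset.sum_ite_mem, Finset.univ_inter]; exact hsum
  have hw2 : ∑ i, w i • p i = 0 := by
    rw [hw]
    have : ∀ i, (if i ∈ s then w0 i else 0) • p i = if i ∈ s then w0 i • p i else 0 := by
      intro i; split <;> simp
    simp only [this]
    rw [Finset.sum_ite_mem, Finset.univ_inter]; exact hcomb
  have hwe : w e ≠ 0 := by simpa [hw, he] using hne
  -- all weights are nonzero
  have hwne : ∀ i, w i ≠ 0 := by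
    intro i hi0
    exact hwe (key w hw1 hw2 i hi0 e)
  set I : Set (Fin (d+2)) := {i | 0 < w i} with hI
  set J : Set (Fin (d+2)) := {i | w i < 0} with hJ
  set If : Finset (Fin (d+2)) := Finset.univ.filter (fun i => 0 < w i) with hIf
  set Jf : Finset (Fin (d+2)) := Finset.univ.filter (fun i => w i < 0) with hJf
  have hJf' : Finset.univ.filter (fun i => ¬ 0 < w i) = Jf := by
    ext i
    simp only [hJf, Finset.mem_filter, Finset.mem_univ, true_and, not_lt]
    exact ⟨fun h => lt_of_le_of_ne h (hwne i), fun h => h.le⟩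
  have hpos : ∃ i, 0 < w i := by
    by_contra h
    push_neg at h
    have hlt : ∀ i ∈ Finset.univ, w i < 0 := fun i _ => lt_of_le_of_ne (h i) (hwne i)
    have := Finset.sum_neg hlt ⟨e, Finset.mem_univ e⟩
    rw [hw1] at this; exact lt_irrefl 0 this
  have hneg : ∃ i, w i < 0 := by
    by_contra h
    push_neg at h
    have hlt : ∀ i ∈ Finset.univ, 0 < w i := fun i _ => lt_of_le_of_ne (h i) (Ne.symm (hwne i))
    have := Finset.sum_pos hlt ⟨e, Finset.mem_univ e⟩
    rw [hw1] at this; exact lt_irrefl 0 this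
  obtain ⟨ip, hip⟩ := hpos
  obtain ⟨jn, hjn⟩ := hneg
  set A : ℝ := ∑ i ∈ If, w i with hA
  have hApos : 0 < A := Finset.sum_pos (fun i hi => (Finset.mem_filter.mp hi).2)
    ⟨ip, Finset.mem_filter.mpr ⟨Finset.mem_univ _, hip⟩⟩
  have hsplit : ∀ f : Fin (d+2) → (Fin d → ℝ), ∑ i ∈ If, f i + ∑ i ∈ Jf, f i = ∑ i, f i := by
    intro f
    rw [← hJf']
    exact Finset.sum_filter_add_sum_filter_not _ _ _
  have hsplitR : A + ∑ i ∈ Jf, w i = 0 := by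
    rw [hA, ← hw1, ← hJf']
    exact Finset.sum_filter_add_sum_filter_not _ _ _
  have hvec : ∑ i ∈ Jf, (-w i) • p i = ∑ i ∈ If, w i • p i := by
    have h := hsplit (fun i => w i • p i)
    rw [hw2] at h
    simp only [neg_smul, Finset.sum_neg_distrib]
    exact neg_eq_of_add_eq_zero_left h
  set x : Fin d → ℝ := A⁻¹ • ∑ i ∈ If, w i • p i with hx
  -- x is in both hulls
  have hxI : x ∈ convexHull ℝ (p '' I) := by
    have h1 : If.centerMass w p ∈ convexHull ℝ (p '' I) :=
      If.centerMass_mem_convexHull (fun i hi => ((Finset.mem_filter.mp hi).2).le) hApos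
        (fun i hi => Set.mem_image_of_mem p ((Finset.mem_filter.mp hi).2))
    have h2 : If.centerMass w p = x := by
      simp only [Finset.centerMass, hx, hA]
    rwa [h2] at h1
  have hxJ : x ∈ convexHull ℝ (p '' J) := by
    have hBA : ∑ i ∈ Jf, -w i = A := by
      rw [Finset.sum_neg_distrib]; linarith
    have hBpos : 0 < ∑ i ∈ Jf, -w i := by rw [hBA]; exact hApos
    have h1 : Jf.centerMass (fun i => -w i) p ∈ convexHull ℝ (p '' J) :=
      Jf.centerMass_mem_convexHull (fun i hi => by linarith [(Finset.mem_filter.mp hi).2]) hBpos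
        (fun i hi => Set.mem_image_of_mem p ((Finset.mem_filter.mp hi).2))
    have h2 : Jf.centerMass (fun i => -w i) p = x := by
      simp only [Finset.centerMass, hx, hA]
      rw [hBA, hvec]
    rwa [h2] at h1
  refine ⟨I, J, ?_, ?_, x, ?_⟩
  · ext i
    simp only [hI, hJ, Set.mem_inter_iff, Set.mem_setOf_eq, Set.mem_empty_iff_false, iff_false,
      not_and]
    intro h1 h2; linarith
  · ext i
    simp only [hI, hJ, Set.mem_union, Set.mem_setOf_eq, Set.mem_univ, iff_true]
    rcases (hwne i).lt_or_gt with h | h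
    · exact Or.inr h
    · exact Or.inl h
  · apply Set.eq_singleton_iff_unique_mem.mpr
    refine ⟨⟨hxI, hxJ⟩, ?_⟩
    rintro y ⟨hyI, hyJ⟩
    obtain ⟨a, ha0, haI, ha1, hay⟩ := radon_extract_weights p I hyI
    obtain ⟨b, hb0, hbJ, hb1, hby⟩ := radon_extract_weights p J hyJ
    set g : Fin (d+2) → ℝ := fun i => a i - b i with hg
    have hg1 : ∑ i, g i = 0 := by
      simp only [hg, Finset.sum_sub_distrib, ha1, hb1, sub_self]
    have hg2 : ∑ i, g i • p i = 0 := by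
      simp only [hg, sub_smul, Finset.sum_sub_distrib, hay, hby, sub_self]
    -- g is proportional to w
    have hprop : ∀ i, g i * w e = g e * w i := by
      intro i
      set c : Fin (d+2) → ℝ := fun i => g i * w e - g e * w i with hc
      have hc1 : ∑ i, c i = 0 := by
        simp only [hc, Finset.sum_sub_distrib, ← Finset.sum_mul, ← Finset.mul_sum, hg1, hw1,
          zero_mul, mul_zero, sub_self]
      have hc2 : ∑ i, c i • p i = 0 := by
        have hterm : ∀ i, c i • p i = w e • (g i • p i) - g e • (w i • p i) := fun i => by
          simp only [hc, sub_smul, mul_comm (g i) (w e), mul_smul]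
        simp only [hterm, Finset.sum_sub_distrib, ← Finset.smul_sum, hg2, hw2, smul_zero,
          sub_self]
      have hce : c e = 0 := by simp only [hc]; ring
      have h5 : g i * w e - g e * w i = 0 := key c hc1 hc2 e hce i
      linarith
    have hgw : ∀ i, g i = (g e / w e) * w i := by
      intro i
      rw [div_mul_eq_mul_div, eq_div_iff hwe]
      exact hprop i
    have hbIf : ∀ i ∈ If, b i = 0 := by
      intro i hi
      exact hbJ i (by
        simp only [hJ, Set.mem_setOf_eq, not_lt]
        exact (Finset.mem_filter.mp hi).2.le)
    have haJf : ∀ i ∈ Jf, a i = 0 := by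
      intro i hi
      exact haI i (by
        simp only [hI, Set.mem_setOf_eq, not_lt]
        exact (Finset.mem_filter.mp hi).2.le)
    have haIf : ∑ i ∈ If, a i = 1 := by
      have h := Finset.sum_filter_add_sum_filter_not Finset.univ (fun i => 0 < w i) a
      rw [hJf'] at h
      rw [Finset.sum_eq_zero haJf, add_zero] at h
      rw [← hIf] at h  -- may be no-op
      rw [h]; exact ha1
    have hgIf : ∑ i ∈ If, g i = 1 := by
      rw [Finset.sum_congr rfl (fun i hi => show g i = a i by
        simp only [hg]; rw [hbIf i hi, sub_zero])]
      exact haIf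
    have hlam : g e / w e = A⁻¹ := by
      have hsum' : ∑ i ∈ If, g i = g e / w e * A := by
        rw [hA, Finset.mul_sum]
        exact Finset.sum_congr rfl fun i _ => hgw i
      rw [hgIf] at hsum'
      exact eq_inv_of_mul_eq_one_left hsum'.symm
    have hysum : ∑ i ∈ If, a i • p i = y := by
      have h := Finset.sum_filter_add_sum_filter_not Finset.univ (fun i => 0 < w i)
        (fun i => a i • p i)
      rw [hJf'] at h
      rw [show ∑ i ∈ Jf, a i • p i = 0 from
        Finset.sum_eq_zero (fun i hi => by rw [haJf i hi, zero_smul]), add_zero] at h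
      rw [h]; exact hay
    have hfin : y = x := by
      rw [← hysum, hx]
      rw [Finset.sum_congr rfl (fun i hi => show a i • p i = A⁻¹ • (w i • p i) by
        have hai : a i = A⁻¹ * w i := by
          have h1 := hgw i
          rw [hlam] at h1
          have h2 : g i = a i := by simp only [hg]; rw [hbIf i hi, sub_zero]
          rw [h2] at h1; exact h1
        rw [hai, mul_smul])]
      rw [← Finset.smul_sum]
    exact hfin
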